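/- With notation as in the bicomodule construction from a relation: the categories R^A(C) of relations on A and S^A(C) of A-A bicomodules are isomorphic. Explicitly, the functor Φ sending a relation r : B → A ⊗ A to the bicomodule (δ^l, δ^r) and the functor Ψ sending a bicomodule (δ^l, δ^r) on B to r = (1_A ⊗ β_A) ∘ (1_A ⊗ (ε_B ⊗ 1_A)) ∘ (1_A ⊗ δ^r) ∘ δ^l are mutually inverse: Ψ ∘ Φ = id and Φ ∘ Ψ = id. -/

import Mathlib

open CategoryTheory MonoidalCategory

variable {C : Type*} [Category C] [MonoidalCategory C] [SymmetricCategory C]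

/-- A C-category structure on a symmetric monoidal category: every object carries a
fixed cocommutative comonoid structure, naturally in the object and compatibly with
the tensor product. -/
structure CStructure (C : Type*) [Category C] [MonoidalCategory C]
    [SymmetricCategory C] where
  δ : ∀ X : C, X ⟶ X ⊗ X
  ε : ∀ X : C, X ⟶ 𝟙_ C
  coassoc : ∀ X : C, δ X ≫ (X ◁ δ X) ≫ (α_ X X X).inv = δ X ≫ (δ X ▷ X)
  counit_left : ∀ X : C, δ X ≫ (ε X ▷ X) ≫ (λ_ X).hom = 𝟙 X
  counit_right : ∀ X : C, δ X ≫ (X ◁ ε X) ≫ (ρ_ X).hom = 𝟙 X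
  cocomm : ∀ X : C, δ X ≫ (β_ X X).hom = δ X
  δ_natural : ∀ {X Y : C} (f : X ⟶ Y), f ≫ δ Y = δ X ≫ (f ⊗ₘ f)
  ε_natural : ∀ {X Y : C} (f : X ⟶ Y), f ≫ ε Y = ε X
  δ_tensor : ∀ X Y : C, δ (X ⊗ Y) =
    (δ X ⊗ₘ δ Y) ≫ (α_ X X (Y ⊗ Y)).hom ≫ (X ◁ (α_ X Y Y).inv) ≫
      (X ◁ ((β_ X Y).hom ▷ Y)) ≫ (X ◁ (α_ Y X Y).hom) ≫ (α_ X Y (X ⊗ Y)).inv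
  ε_tensor : ∀ X Y : C, ε (X ⊗ Y) = (ε X ⊗ₘ ε Y) ≫ (λ_ (𝟙_ C)).hom

/-- `(dl, dr)` is an `A-A` bicomodule structure on `B`. -/
def IsBicomodule (A : C) (δA : A ⟶ A ⊗ A) (εA : A ⟶ 𝟙_ C)
    (B : C) (dl : B ⟶ A ⊗ B) (dr : B ⟶ B ⊗ A) : Prop :=
  (dl ≫ (A ◁ dl) ≫ (α_ A A B).inv = dl ≫ (δA ▷ B)) ∧
  (dl ≫ (εA ▷ B) ≫ (λ_ B).hom = 𝟙 B) ∧
  (dr ≫ (B ◁ δA) ≫ (α_ B A A).inv = dr ≫ (dr ▷ A)) ∧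
  (dr ≫ (B ◁ εA) ≫ (ρ_ B).hom = 𝟙 B) ∧
  (dr ≫ (dl ▷ A) = dl ≫ (A ◁ dr) ≫ (α_ A B A).inv)

/-- The left coaction `Φ(r)^l` induced by a relation `r : B ⟶ A ⊗ A`. -/
def PhiL (S : CStructure C) (A B : C) (r : B ⟶ A ⊗ A) : B ⟶ A ⊗ B :=
  S.δ B ≫ (r ▷ B) ≫ ((A ◁ S.ε A) ▷ B) ≫ ((ρ_ A).hom ▷ B)

/-- The right coaction `Φ(r)^r` induced by a relation `r : B ⟶ A ⊗ A`. -/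
def PhiR (S : CStructure C) (A B : C) (r : B ⟶ A ⊗ A) : B ⟶ B ⊗ A :=
  S.δ B ≫ (B ◁ r) ≫ (B ◁ (S.ε A ▷ A)) ≫ (B ◁ (λ_ A).hom)

/-- The relation `Ψ(δ^l, δ^r) = (1_A ⊗ β_A) ∘ (1_A ⊗ (ε_B ⊗ 1_A)) ∘ (1_A ⊗ δ^r) ∘ δ^l`
induced by an `A-A` bicomodule structure on `B`. -/
def Psi (S : CStructure C) (A B : C) (dl : B ⟶ A ⊗ B) (dr : B ⟶ B ⊗ A) :
    B ⟶ A ⊗ A :=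
  dl ≫ (A ◁ dr) ≫ (A ◁ (S.ε B ▷ A)) ≫ (A ◁ (λ_ A).hom)


theorem shuffleH (X Y : C) (f : X ⟶ 𝟙_ C) (g : Y ⟶ 𝟙_ C) :
    (α_ X X (Y ⊗ Y)).hom ≫ (X ◁ (α_ X Y Y).inv) ≫
      (X ◁ ((β_ X Y).hom ▷ Y)) ≫ (X ◁ (α_ Y X Y).hom) ≫ (α_ X Y (X ⊗ Y)).inv ≫
      (((X ◁ g) ≫ (ρ_ X).hom) ⊗ₘ ((f ▷ Y) ≫ (λ_ Y).hom)) =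
    (((X ◁ f) ≫ (ρ_ X).hom) ⊗ₘ ((g ▷ Y) ≫ (λ_ Y).hom)) := by
  simp [MonoidalCategory.tensorHom_def, whisker_exchange]
  simp only [← MonoidalCategory.whiskerLeft_comp]
  congr 1
  slice_lhs 2 3 => rw [← comp_whiskerRight, ← BraidedCategory.braiding_naturality_right,
    comp_whiskerRight]
  simp
  slice_lhs 1 2 => rw [← MonoidalCategory.whiskerLeft_comp]
  slice_lhs 1 2 => rw [whisker_exchange]
  slice_lhs 2 3 => rw [leftUnitor_naturality]
  slice_rhs 2 3 => rw [associator_naturality_left]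
  simp

theorem counit_pair (S : CStructure C) (X Y : C) :
    S.δ (X ⊗ Y) ≫ (((X ◁ S.ε Y) ≫ (ρ_ X).hom) ⊗ₘ ((S.ε X ▷ Y) ≫ (λ_ Y).hom)) =
      𝟙 (X ⊗ Y) := by
  rw [S.δ_tensor, Category.assoc, Category.assoc, Category.assoc, Category.assoc,
    Category.assoc, shuffleH, tensorHom_comp_tensorHom,
    S.counit_right, S.counit_left, id_tensorHom_id]

theorem slideR (S : CStructure C) {A B : C} (q : B ⟶ A) :
    S.δ B ≫ (B ◁ q) ≫ (S.ε B ▷ A) ≫ (λ_ A).hom = q := by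
  slice_lhs 2 3 => rw [whisker_exchange]
  slice_lhs 3 4 => rw [leftUnitor_naturality]
  slice_lhs 1 3 => rw [S.counit_left]
  simp

theorem coactL (S : CStructure C) {A B : C} (dl : B ⟶ A ⊗ B)
    (co2 : dl ≫ (S.ε A ▷ B) ≫ (λ_ B).hom = 𝟙 B) :
    S.δ B ≫ ((dl ≫ (A ◁ S.ε B) ≫ (ρ_ A).hom) ▷ B) = dl := by
  symm
  calc dl = dl ≫ 𝟙 (A ⊗ B) := by simp
    _ = dl ≫ S.δ (A ⊗ B) ≫
        (((A ◁ S.ε B) ≫ (ρ_ A).hom) ⊗ₘ ((S.ε A ▷ B) ≫ (λ_ B).hom)) := by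
        rw [counit_pair]
    _ = S.δ B ≫ (dl ⊗ₘ dl) ≫
        (((A ◁ S.ε B) ≫ (ρ_ A).hom) ⊗ₘ ((S.ε A ▷ B) ≫ (λ_ B).hom)) := by
        rw [← Category.assoc, S.δ_natural, Category.assoc]
    _ = S.δ B ≫ ((dl ≫ (A ◁ S.ε B) ≫ (ρ_ A).hom) ⊗ₘ (dl ≫ (S.ε A ▷ B) ≫ (λ_ B).hom)) := by
        rw [tensorHom_comp_tensorHom]
    _ = S.δ B ≫ ((dl ≫ (A ◁ S.ε B) ≫ (ρ_ A).hom) ▷ B) := by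
        rw [co2, tensorHom_id]

theorem coactR (S : CStructure C) {A B : C} (dr : B ⟶ B ⊗ A)
    (co4 : dr ≫ (B ◁ S.ε A) ≫ (ρ_ B).hom = 𝟙 B) :
    S.δ B ≫ (B ◁ (dr ≫ (S.ε B ▷ A) ≫ (λ_ A).hom)) = dr := by
  symm
  calc dr = dr ≫ 𝟙 (B ⊗ A) := by simp
    _ = dr ≫ S.δ (B ⊗ A) ≫
        (((B ◁ S.ε A) ≫ (ρ_ B).hom) ⊗ₘ ((S.ε B ▷ A) ≫ (λ_ A).hom)) := by
        rw [counit_pair]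
    _ = S.δ B ≫ (dr ⊗ₘ dr) ≫
        (((B ◁ S.ε A) ≫ (ρ_ B).hom) ⊗ₘ ((S.ε B ▷ A) ≫ (λ_ A).hom)) := by
        rw [← Category.assoc, S.δ_natural, Category.assoc]
    _ = S.δ B ≫ ((dr ≫ (B ◁ S.ε A) ≫ (ρ_ B).hom) ⊗ₘ (dr ≫ (S.ε B ▷ A) ≫ (λ_ A).hom)) := by
        rw [tensorHom_comp_tensorHom]
    _ = S.δ B ≫ (B ◁ (dr ≫ (S.ε B ▷ A) ≫ (λ_ A).hom)) := by
        rw [co4, id_tensorHom]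


/-- The categories of relations on `A` and of `A-A` bicomodules are isomorphic:
`Φ` and `Ψ` (which are the identity on underlying arrows) are mutually inverse,
i.e. `Ψ ∘ Φ = id` on relations and `Φ ∘ Ψ = id` on bicomodules. -/
theorem phi_psi_inverse (S : CStructure C) (A B : C) :
    (∀ r : B ⟶ A ⊗ A, Psi S A B (PhiL S A B r) (PhiR S A B r) = r) ∧
    (∀ (dl : B ⟶ A ⊗ B) (dr : B ⟶ B ⊗ A),
      IsBicomodule A (S.δ A) (S.ε A) B dl dr →
        PhiL S A B (Psi S A B dl dr) = dl ∧ PhiR S A B (Psi S A B dl dr) = dr) := by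
  constructor
  · intro r
    have hq : PhiR S A B r ≫ (S.ε B ▷ A) ≫ (λ_ A).hom
        = r ≫ (S.ε A ▷ A) ≫ (λ_ A).hom := by
      unfold PhiR
      simp only [Category.assoc, ← MonoidalCategory.whiskerLeft_comp]
      exact slideR S _
    unfold Psi
    simp only [Category.assoc, ← MonoidalCategory.whiskerLeft_comp]
    rw [hq]
    unfold PhiL
    simp only [Category.assoc, ← comp_whiskerRight]
    rw [← MonoidalCategory.tensorHom_def, ← tensorHom_comp_tensorHom, ← Category.assoc, ← S.δ_natural,
      Category.assoc, counit_pair, Category.comp_id]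
  · intro dl dr h
    obtain ⟨co1, co2, co3, co4, co5⟩ := h
    have hn : Psi S A B dl dr = dl ≫ (A ◁ (dr ≫ (S.ε B ▷ A) ≫ (λ_ A).hom)) := by
      unfold Psi
      simp only [Category.assoc, ← MonoidalCategory.whiskerLeft_comp]
    have hπ1 : Psi S A B dl dr ≫ (A ◁ S.ε A) ≫ (ρ_ A).hom
        = dl ≫ (A ◁ S.ε B) ≫ (ρ_ A).hom := by
      rw [hn, Category.assoc, ← MonoidalCategory.whiskerLeft_comp_assoc,
        S.ε_natural (dr ≫ (S.ε B ▷ A) ≫ (λ_ A).hom)]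
    have hπ2 : Psi S A B dl dr ≫ (S.ε A ▷ A) ≫ (λ_ A).hom
        = dr ≫ (S.ε B ▷ A) ≫ (λ_ A).hom := by
      rw [hn, Category.assoc, whisker_exchange_assoc,
        MonoidalCategory.leftUnitor_naturality, reassoc_of% co2]
    constructor
    · unfold PhiL
      simp only [Category.assoc, ← comp_whiskerRight]
      rw [hπ1]
      exact coactL S dl co2
    · unfold PhiR
      simp only [Category.assoc, ← MonoidalCategory.whiskerLeft_comp]
      rw [hπ2]
      exact coactR S dr co4
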